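/- For η = 0 and (δT,δX) ∈ ℕ², the dimension of the evaluation code C_0(δT,δX) equals (min(δT,q)+1)·(min(δX,q)+1). -/

import Mathlib

open MvPolynomial

attribute [local instance] Classical.propDecidable

namespace Hirz

/-- Index type for the `(q+1)²` rational points of the Hirzebruch surface. -/
abbrev HIdx (F : Type) := (F × F) ⊕ F ⊕ F ⊕ Unit

variable (F : Type) [Field F] [Fintype F]

/-- The homogeneous coordinates of the rational points of `H_η`. -/
def pt : HIdx F → Fin 4 → F
  | Sum.inl (a, b) => ![1, a, 1, b]
  | Sum.inr (Sum.inl b) => ![0, 1, 1, b]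
  | Sum.inr (Sum.inr (Sum.inl a)) => ![1, a, 0, 1]
  | Sum.inr (Sum.inr (Sum.inr _)) => ![0, 1, 0, 1]

/-- Evaluation of a polynomial at all the rational points. -/
noncomputable def ev (P : MvPolynomial (Fin 4) F) : HIdx F → F :=
  fun i => eval (pt F i) P

/-- `c` is the exponent vector (T1,T2,X1,X2) of a monomial of bidegree `(δT, δX)`. -/
def IsBideg (η : ℕ) (δT : ℤ) (δX : ℕ) (c : Fin 4 → ℕ) : Prop :=
  (c 0 : ℤ) + (c 1 : ℤ) - (η : ℤ) * (c 2 : ℤ) = δT ∧ c 2 + c 3 = δX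

/-- The monomial with exponent vector `c`. -/
noncomputable def mon (c : Fin 4 → ℕ) : MvPolynomial (Fin 4) F :=
  monomial (Finsupp.equivFunOnFinite.symm c) (1 : F)

/-- The set of monomials of bidegree `(δT, δX)`. -/
def MSet (η : ℕ) (δT : ℤ) (δX : ℕ) : Set (MvPolynomial (Fin 4) F) :=
  {P | ∃ c : Fin 4 → ℕ, IsBideg η δT δX c ∧ P = mon F c}

/-- `R(δT,δX)`, the space of homogeneous polynomials of bidegree `(δT,δX)`. -/
noncomputable def RSpan (η : ℕ) (δT : ℤ) (δX : ℕ) : Submodule F (MvPolynomial (Fin 4) F) :=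
  Submodule.span F (MSet F η δT δX)

/-- The code `C_η(δT,δX)`, image of `R(δT,δX)` under evaluation. -/
noncomputable def Code (η : ℕ) (δT : ℤ) (δX : ℕ) : Submodule F (HIdx F → F) :=
  Submodule.span F (ev F '' MSet F η δT δX)

/-- Hamming weight. -/
noncomputable def wt (v : HIdx F → F) : ℕ := {i | v i ≠ 0}.ncard

/-- Minimum distance of `C_η(δT,δX)`. -/
noncomputable def dmin (η : ℕ) (δT : ℤ) (δX : ℕ) : ℕ :=
  sInf {w : ℕ | ∃ v ∈ Code F η δT δX, v ≠ 0 ∧ wt F v = w}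

/-- `⌊A⌋` where `A = δX` if `δT ≥ 0` and `A = δ/η` otherwise. -/
def Afloor (η : ℕ) (δT : ℤ) (δX : ℕ) : ℤ :=
  if 0 ≤ δT then (δX : ℤ) else (δT + (η : ℤ) * (δX : ℤ)) / (η : ℤ)

/-- Exponent vector of the monomial `M(d2,c2)`. -/
def Mexp (η : ℕ) (δT : ℤ) (δX : ℕ) (d2 c2 : ℕ) : Fin 4 → ℕ :=
  ![(δT + (η : ℤ) * ((δX : ℤ) - (d2 : ℤ)) - (c2 : ℤ)).toNat, c2, δX - d2, d2]

/-- The monomial `M(d2,c2) = T1^(δT+η(δX-d2)-c2) T2^c2 X1^(δX-d2) X2^d2`. -/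
noncomputable def Mmon (η : ℕ) (δT : ℤ) (δX : ℕ) (d2 c2 : ℕ) : MvPolynomial (Fin 4) F :=
  mon F (Mexp η δT δX d2 c2)

/-- The lattice polygon `P(δT,δX)`. -/
def PSet (η : ℕ) (δT : ℤ) (δX : ℕ) : Set (ℕ × ℕ) :=
  {p | (p.1 : ℤ) ≤ Afloor η δT δX ∧ (p.2 : ℤ) ≤ δT + (η : ℤ) * ((δX : ℤ) - (p.1 : ℤ))}

/-- The set `A_X = {α : α ≤ min(⌊A⌋, q-1)} ∪ ({A} ∩ ℕ)`. -/
def AX (η : ℕ) (δT : ℤ) (δX : ℕ) (q : ℕ) : Set ℕ :=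
  {α | (α : ℤ) ≤ min (Afloor η δT δX) ((q : ℤ) - 1)} ∪
    {α | if 0 ≤ δT then (α : ℤ) = (δX : ℤ)
         else (α : ℤ) * (η : ℤ) = δT + (η : ℤ) * (δX : ℤ)}

/-- The set of representatives `K(δT,δX)`. -/
def KSet (η : ℕ) (δT : ℤ) (δX : ℕ) (q : ℕ) : Set (ℕ × ℕ) :=
  {p | p.1 ∈ AX η δT δX q ∧
    ((p.2 : ℤ) ≤ min (δT + (η : ℤ) * (δX : ℤ) - (η : ℤ) * (p.1 : ℤ)) (q : ℤ) - 1 ∨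
      (p.2 : ℤ) = δT + (η : ℤ) * (δX : ℤ) - (η : ℤ) * (p.1 : ℤ))}

/-- Condition (H): `η ≥ 2`, `δT < 0`, `η ∣ δT` and `q ≤ δX + δT/η`. -/
def CondH (η : ℕ) (δT : ℤ) (δX : ℕ) (q : ℕ) : Prop :=
  2 ≤ η ∧ δT < 0 ∧ (η : ℤ) ∣ δT ∧ (q : ℤ) ≤ (δX : ℤ) + δT / (η : ℤ)

/-- `K*(δT,δX)`: `K(δT,δX)` minus `(δ/η, 0)` if (H) holds. -/
def KStar (η : ℕ) (δT : ℤ) (δX : ℕ) (q : ℕ) : Set (ℕ × ℕ) :=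
  if CondH η δT δX q then
    KSet η δT δX q \ {(((δT + (η : ℤ) * (δX : ℤ)) / (η : ℤ)).toNat, 0)}
  else KSet η δT δX q

/-- `Δ*(δT,δX) = {M(α,β) : (α,β) ∈ K*(δT,δX)}`. -/
noncomputable def DeltaStar (η : ℕ) (δT : ℤ) (δX : ℕ) (q : ℕ) :
    Set (MvPolynomial (Fin 4) F) :=
  {P | ∃ p ∈ KStar η δT δX q, P = Mmon F η δT δX p.1 p.2}

section Aux

/-- "Projective line": `F` plus a point at infinity. -/
abbrev Pone (F : Type) := F ⊕ Unit

/-- The basic function on `Pone F`: `a ↦ a^c` with value `[c = N]` at infinity. -/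
def uu (F : Type) [Field F] (N c : ℕ) : Pone F → F
  | Sum.inl a => a ^ c
  | Sum.inr _ => if c = N then 1 else 0

/-- Identify `HIdx F` with `Pone F × Pone F`. -/
def toP (F : Type) : HIdx F → Pone F × Pone F
  | Sum.inl (a, b) => (Sum.inl a, Sum.inl b)
  | Sum.inr (Sum.inl b) => (Sum.inr (), Sum.inl b)
  | Sum.inr (Sum.inr (Sum.inl a)) => (Sum.inl a, Sum.inr ())
  | Sum.inr (Sum.inr (Sum.inr _)) => (Sum.inr (), Sum.inr ())

lemma toP_surjective (F : Type) : Function.Surjective (toP F) := by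
  rintro ⟨x | ⟨⟩, y | ⟨⟩⟩
  exacts [⟨Sum.inl (x, y), rfl⟩, ⟨Sum.inr (Sum.inr (Sum.inl x)), rfl⟩,
    ⟨Sum.inr (Sum.inl y), rfl⟩, ⟨Sum.inr (Sum.inr (Sum.inr ())), rfl⟩]

variable {F : Type} [Field F] [Fintype F]

lemma eval_mon (x : Fin 4 → F) (c : Fin 4 → ℕ) :
    eval x (mon F c) = x 0 ^ c 0 * x 1 ^ c 1 * x 2 ^ c 2 * x 3 ^ c 3 := by
  rw [mon, eval_monomial, Finsupp.prod_fintype _ _ (fun _ => pow_zero _)]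
  simp [Fin.prod_univ_four, mul_assoc]

lemma ev_mon_eq {δT δX : ℕ} {c : Fin 4 → ℕ} (h : IsBideg 0 (δT : ℤ) δX c) (i : HIdx F) :
    ev F (mon F c) i = uu F δT (c 1) (toP F i).1 * uu F δX (c 3) (toP F i).2 := by
  obtain ⟨h1, h2⟩ := h
  have h1' : c 0 + c 1 = δT := by push_cast at h1; omega
  have e0 : (0 : F) ^ (c 0) = if c 1 = δT then 1 else 0 := by
    rw [zero_pow_eq]
    congr 1
    simp only [eq_iff_iff]
    omega
  have e2 : (0 : F) ^ (c 2) = if c 3 = δX then 1 else 0 := by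
    rw [zero_pow_eq]
    congr 1
    simp only [eq_iff_iff]
    omega
  rcases i with ⟨a, b⟩ | b | a | ⟨⟩ <;>
    simp [ev, pt, toP, uu, eval_mon, e0, e2] <;> ring

end Aux

set_option linter.unusedSectionVars false

section Aux2
variable {F : Type} [Field F] [Fintype F]

/-- Representative exponents: `0, 1, ..., min N q - 1, N`. -/
def eexp (F : Type) [Fintype F] (N : ℕ) (i : Fin (min N (Fintype.card F) + 1)) : ℕ :=
  if (i : ℕ) = min N (Fintype.card F) then N else (i : ℕ)

lemma eexp_le (N : ℕ) (i : Fin (min N (Fintype.card F) + 1)) : eexp F N i ≤ N := by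
  unfold eexp
  split
  · exact le_rfl
  · have := i.isLt
    omega

lemma uu_shift (N c : ℕ) (hc : Fintype.card F ≤ c) (hN : c < N) :
    uu F N c = uu F N (c - (Fintype.card F - 1)) := by
  have hq : 2 ≤ Fintype.card F := Fintype.one_lt_card
  funext x
  cases x with
  | inl a =>
    by_cases ha : a = 0
    · subst ha
      show (0 : F) ^ c = (0 : F) ^ (c - (Fintype.card F - 1))
      rw [zero_pow (by omega), zero_pow (by omega)]
    · have h1 : a ^ (Fintype.card F - 1) = 1 := FiniteField.pow_card_sub_one_eq_one a ha
      show a ^ c = a ^ (c - (Fintype.card F - 1))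
      calc a ^ c = a ^ (c - (Fintype.card F - 1)) * a ^ (Fintype.card F - 1) := by
            rw [← pow_add]; congr 1; omega
        _ = a ^ (c - (Fintype.card F - 1)) := by rw [h1, mul_one]
  | inr _ =>
    show (if c = N then (1:F) else 0) = if c - (Fintype.card F - 1) = N then 1 else 0
    rw [if_neg (by omega), if_neg (by omega)]

lemma uu_reduce (N : ℕ) : ∀ c, c ≤ N →
    ∃ i : Fin (min N (Fintype.card F) + 1), uu F N c = uu F N (eexp F N i) := by
  have hq : 2 ≤ Fintype.card F := Fintype.one_lt_card
  intro c
  induction c using Nat.strong_induction_on with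
  | _ c ih =>
    intro hcN
    rcases eq_or_lt_of_le hcN with rfl | hlt
    · refine ⟨Fin.last _, ?_⟩
      congr 1
      simp [eexp]
    · by_cases hcq : c < Fintype.card F
      · have hcm : c < min N (Fintype.card F) := lt_min hlt hcq
        refine ⟨⟨c, by omega⟩, ?_⟩
        have he : eexp F N ⟨c, by omega⟩ = c := if_neg (Nat.ne_of_lt hcm)
        rw [he]
      · obtain ⟨i, hi⟩ := ih (c - (Fintype.card F - 1)) (by omega) (by omega)
        exact ⟨i, (uu_shift N c (by omega) hlt).trans hi⟩

lemma eexp_inj (N : ℕ) : Function.Injective (eexp F N) := by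
  intro i j hij
  have hi := i.isLt
  have hj := j.isLt
  simp only [eexp] at hij
  split_ifs at hij with h1 h2 h2 <;> [skip; skip; skip; skip] <;>
    first
      | exact Fin.ext (h1.trans h2.symm)
      | omega
      | exact Fin.ext hij

lemma uu_li (N : ℕ) : LinearIndependent F (fun i => uu F N (eexp F N i)) := by
  have hq : 2 ≤ Fintype.card F := Fintype.one_lt_card
  set m := min N (Fintype.card F) with hm
  have hmN : m ≤ N := min_le_left _ _
  have hmq : m ≤ Fintype.card F := min_le_right _ _
  rw [Fintype.linearIndependent_iff]
  intro g hg
  have hlast : g (Fin.last m) = 0 := by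
    have h0 := congrFun hg (Sum.inr ())
    simp only [Finset.sum_apply, Pi.smul_apply, smul_eq_mul, Pi.zero_apply] at h0
    rw [Finset.sum_eq_single (Fin.last m)] at h0
    · simpa [uu, eexp, hm] using h0
    · intro j _ hj
      have hjv : (j : ℕ) < m := by
        have := j.isLt
        have : (j : ℕ) ≠ m := fun h => hj (Fin.ext (by simp [h]))
        omega
      have : uu F N (eexp F N j) (Sum.inr ()) = 0 := by
        simp only [uu, eexp, if_neg (show (j : ℕ) ≠ min N (Fintype.card F) by omega)]
        rw [if_neg (by omega)]
      rw [this, mul_zero]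
    · simp
  -- polynomial argument for the other coefficients
  set P : Polynomial F :=
    ∑ i ∈ Finset.univ.erase (Fin.last m), Polynomial.C (g i) * Polynomial.X ^ (i : ℕ) with hP
  have hdeg : P.natDegree < Fintype.card F := by
    have : P.natDegree ≤ m - 1 + 0 := by
      apply Polynomial.natDegree_sum_le_of_forall_le
      intro i hi
      rcases Finset.mem_erase.mp hi with ⟨hne, -⟩
      have hiv : (i : ℕ) < m := by
        have := i.isLt
        have : (i : ℕ) ≠ m := fun h => hne (Fin.ext (by simp [h]))
        omega
      calc (Polynomial.C (g i) * Polynomial.X ^ (i : ℕ)).natDegree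
          ≤ (Polynomial.C (g i)).natDegree + (Polynomial.X ^ (i : ℕ) : Polynomial F).natDegree :=
            Polynomial.natDegree_mul_le
        _ ≤ m - 1 + 0 := by
            rw [Polynomial.natDegree_C, Polynomial.natDegree_X_pow]
            omega
    omega
  have heval : ∀ a : F, P.eval a = 0 := by
    intro a
    have h0 := congrFun hg (Sum.inl a)
    simp only [Finset.sum_apply, Pi.smul_apply, smul_eq_mul, Pi.zero_apply] at h0
    rw [← Finset.sum_erase_add _ _ (Finset.mem_univ (Fin.last m)), hlast, zero_mul,
      add_zero] at h0
    rw [hP]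
    simp only [Polynomial.eval_finset_sum, Polynomial.eval_mul, Polynomial.eval_C,
      Polynomial.eval_pow, Polynomial.eval_X]
    rw [← h0]
    apply Finset.sum_congr rfl
    intro i hi
    rcases Finset.mem_erase.mp hi with ⟨hne, -⟩
    have hiv : (i : ℕ) < m := by
      have := i.isLt
      have : (i : ℕ) ≠ m := fun h => hne (Fin.ext (by simp [h]))
      omega
    have : uu F N (eexp F N i) (Sum.inl a) = a ^ (i : ℕ) := by
      simp only [uu, eexp, if_neg (show (i : ℕ) ≠ min N (Fintype.card F) by omega)]
    rw [this]
  have hP0 : P = 0 :=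
    Polynomial.eq_zero_of_natDegree_lt_card_of_eval_eq_zero P Function.injective_id
      (fun a => heval a) hdeg
  intro i
  by_cases hil : i = Fin.last m
  · rw [hil]; exact hlast
  · have hiv : (i : ℕ) < m := by
      have := i.isLt
      have : (i : ℕ) ≠ m := fun h => hil (Fin.ext (by simp [h]))
      omega
    have : P.coeff (i : ℕ) = g i := by
      rw [hP, Polynomial.finset_sum_coeff]
      rw [Finset.sum_eq_single i]
      · simp [Polynomial.coeff_C_mul, Polynomial.coeff_X_pow]
      · intro j hj hji
        have : (j : ℕ) ≠ (i : ℕ) := fun h => hji (Fin.ext h)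
        rw [Polynomial.coeff_C_mul, Polynomial.coeff_X_pow, if_neg (Ne.symm this), mul_zero]
      · simp [Finset.mem_erase, hil]
    rw [← this, hP0, Polynomial.coeff_zero]

end Aux2

section Aux3
variable {F : Type} [Field F] [Fintype F]

lemma mul_li {α β ι κ : Type} [Fintype ι] [Fintype κ] {f : ι → α → F} {g : κ → β → F}
    (hf : LinearIndependent F f) (hg : LinearIndependent F g) :
    LinearIndependent F (fun p : ι × κ => fun xy : α × β => f p.1 xy.1 * g p.2 xy.2) := by
  rw [Fintype.linearIndependent_iff]
  intro lam hsum
  have key : ∀ y : β, ∀ i : ι, (∑ j, lam (i, j) * g j y) = 0 := by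
    intro y
    apply Fintype.linearIndependent_iff.mp hf (fun i => ∑ j, lam (i, j) * g j y)
    funext x
    have h0 := congrFun hsum (x, y)
    simp only [Finset.sum_apply, Pi.smul_apply, smul_eq_mul, Pi.zero_apply,
      Fintype.sum_prod_type] at h0 ⊢
    rw [← h0]
    apply Finset.sum_congr rfl
    intro i _
    rw [Finset.sum_mul]
    apply Finset.sum_congr rfl
    intro j _
    ring
  rintro ⟨i0, j0⟩
  have h1 : ∀ j, lam (i0, j) = 0 := by
    apply Fintype.linearIndependent_iff.mp hg (fun j => lam (i0, j))
    funext y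
    simp only [Finset.sum_apply, Pi.smul_apply, smul_eq_mul, Pi.zero_apply]
    exact key y i0
  exact h1 j0

end Aux3

section Main
variable {F : Type} [Field F] [Fintype F]

lemma code_eq_span (δT δX : ℕ) :
    ev F '' MSet F 0 (δT : ℤ) δX =
      Set.range (fun p : Fin (min δT (Fintype.card F) + 1) × Fin (min δX (Fintype.card F) + 1) =>
        fun k : HIdx F =>
          uu F δT (eexp F δT p.1) (toP F k).1 * uu F δX (eexp F δX p.2) (toP F k).2) := by
  apply Set.Subset.antisymm
  · rintro _ ⟨P, ⟨c, hc, rfl⟩, rfl⟩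
    have h1 : c 1 ≤ δT := by
      obtain ⟨ha, -⟩ := hc
      push_cast at ha
      omega
    have h3 : c 3 ≤ δX := by
      obtain ⟨-, hb⟩ := hc
      omega
    obtain ⟨i, hi⟩ := uu_reduce (F := F) δT (c 1) h1
    obtain ⟨j, hj⟩ := uu_reduce (F := F) δX (c 3) h3
    refine ⟨(i, j), ?_⟩
    funext k
    simp only
    rw [← hi, ← hj]
    exact (ev_mon_eq hc k).symm
  · rintro _ ⟨⟨i, j⟩, rfl⟩
    have hle1 : eexp F δT i ≤ δT := eexp_le δT i
    have hle2 : eexp F δX j ≤ δX := eexp_le δX j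
    set c : Fin 4 → ℕ :=
      ![δT - eexp F δT i, eexp F δT i, δX - eexp F δX j, eexp F δX j] with hcdef
    have hc0 : c 0 = δT - eexp F δT i := rfl
    have hc1 : c 1 = eexp F δT i := rfl
    have hc2 : c 2 = δX - eexp F δX j := rfl
    have hc3 : c 3 = eexp F δX j := rfl
    have hc : IsBideg 0 (δT : ℤ) δX c := by
      constructor
      · rw [hc0, hc1, hc2]
        push_cast [Nat.cast_sub hle1]
        ring
      · rw [hc2, hc3]
        omega
    refine ⟨mon F c, ⟨c, hc, rfl⟩, ?_⟩
    funext k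
    rw [ev_mon_eq hc k, hc1, hc3]

theorem statement7' (δT δX : ℕ) :
    Module.finrank F (Code F 0 (δT : ℤ) δX) =
      (min δT (Fintype.card F) + 1) * (min δX (Fintype.card F) + 1) := by
  classical
  set G : Fin (min δT (Fintype.card F) + 1) × Fin (min δX (Fintype.card F) + 1) →
      (HIdx F → F) :=
    fun p => fun k =>
      uu F δT (eexp F δT p.1) (toP F k).1 * uu F δX (eexp F δX p.2) (toP F k).2 with hGdef
  have hGli : LinearIndependent F G := by
    have hten := mul_li (uu_li (F := F) δT) (uu_li (F := F) δX)
    have hinj := LinearMap.funLeft_injective_of_surjective F F (toP F) (toP_surjective F)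
    have := hten.map' (LinearMap.funLeft F F (toP F)) (LinearMap.ker_eq_bot.mpr hinj)
    exact this
  have hcode : Code F 0 (δT : ℤ) δX = Submodule.span F (Set.range G) := by
    rw [Code, code_eq_span]
  rw [hcode, finrank_span_eq_card hGli, Fintype.card_prod, Fintype.card_fin, Fintype.card_fin]

end Main


/-- for `η = 0`, `dim C_0(δT,δX) = (min(δT,q)+1)(min(δX,q)+1)`. -/
theorem statement7 (δT δX : ℕ) :
    Module.finrank F (Code F 0 (δT : ℤ) δX) =
      (min δT (Fintype.card F) + 1) * (min δX (Fintype.card F) + 1) :=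
  statement7' δT δX

end Hirz
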